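/- Let N ≥ 0, let n = N+2, and let Q be the n×n symmetric tridiagonal matrix with Q_{ii} = 2 for all i and Q_{i,i+1} = Q_{i+1,i} = 1, all other entries zero. Let R > 0, define f(x) = (1/2) xᵀQx, set x_0 = R e_1 (where e_1 is the first standard basis vector of ℝ^n), and generate iterates x_i = x_0 − Σ_{k=0}^{i−1} h_{i,k} g_k and gradients g_i = Q x_i for i = 0, …, N, where the real coefficients satisfy h_{i,i−1} ≠ 0 for all i ∈ {1, …, N}. Then the n vectors x_0, g_0, g_1, …, g_N are linearly independent in ℝ^n. -/

import Mathlib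

/-- Slater-point construction in the proof of Theorem 6 of the paper: applying a
fixed-step first-order method with `h i (i-1) ≠ 0` to the quadratic `f(x) = ½ xᵀQx`
(with `Q` the tridiagonal matrix with `2` on the diagonal and `1` on the sub- and
super-diagonals) started from `x₀ = R e₁` yields vectors `x₀, g₀, …, g_N` that are
linearly independent in `ℝ^{N+2}`. -/
theorem slater_point_construction (N : ℕ) (R : ℝ) (hR : 0 < R)
    (h : ℕ → ℕ → ℝ) (hH : ∀ i, 1 ≤ i → i ≤ N → h i (i - 1) ≠ 0)
    (Q : Matrix (Fin (N + 2)) (Fin (N + 2)) ℝ)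
    (hQ : ∀ i j : Fin (N + 2), Q i j =
      if (i : ℕ) = (j : ℕ) then 2
      else if (i : ℕ) + 1 = (j : ℕ) ∨ (j : ℕ) + 1 = (i : ℕ) then 1 else 0)
    (x g : ℕ → (Fin (N + 2) → ℝ))
    (hx0 : x 0 = fun j => if j = 0 then R else 0)
    (hg : ∀ i ≤ N, g i = Q.mulVec (x i))
    (hx : ∀ i, 1 ≤ i → i ≤ N → x i = x 0 - ∑ k ∈ Finset.range i, h i k • g k) :
    LinearIndependent ℝ
      (Fin.cons (x 0) (fun k : Fin (N + 1) => g (k : ℕ)) : Fin (N + 2) → (Fin (N + 2) → ℝ)) := by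
  have hRne : R ≠ 0 := ne_of_gt hR
  -- zero pattern of x 0
  have hx0z : ∀ j : Fin (N + 2), 0 < (j : ℕ) → x 0 j = 0 := by
    intro j hj
    rw [hx0]
    simp only
    rw [if_neg]
    intro e
    rw [e] at hj
    simp at hj
  -- g i vanishes above coordinate i+1
  have hgz : ∀ i ≤ N, (∀ j : Fin (N + 2), i < (j : ℕ) → x i j = 0) →
      ∀ j : Fin (N + 2), i + 1 < (j : ℕ) → g i j = 0 := by
    intro i hiN hxz j hj
    rw [hg i hiN]
    show ∑ k, Q j k * x i k = 0
    apply Finset.sum_eq_zero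
    intro k _
    by_cases hk : (k : ℕ) ≤ i
    · rw [hQ, if_neg (by omega), if_neg (by omega), zero_mul]
    · rw [hxz k (by omega), mul_zero]
  -- the coordinate i+1 of g i equals coordinate i of x i
  have hgd : ∀ i, ∀ hiN : i ≤ N, (∀ j : Fin (N + 2), i < (j : ℕ) → x i j = 0) →
      g i ⟨i + 1, by omega⟩ = x i ⟨i, by omega⟩ := by
    intro i hiN hxz
    rw [hg i hiN]
    show ∑ k, Q ⟨i + 1, by omega⟩ k * x i k = x i ⟨i, by omega⟩
    rw [Finset.sum_eq_single (⟨i, by omega⟩ : Fin (N + 2))]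
    · rw [hQ]
      simp only [Fin.val_mk]
      rw [if_neg (by omega), if_pos (Or.inr trivial), one_mul]
    · intro k _ hk
      have hk' : (k : ℕ) ≠ i := fun e => hk (Fin.ext e)
      by_cases hki : (k : ℕ) ≤ i
      · rw [hQ]
        simp only [Fin.val_mk]
        rw [if_neg (by omega), if_neg (by omega), zero_mul]
      · rw [hxz k (by omega), mul_zero]
    · intro habs
      exact absurd (Finset.mem_univ _) habs
  -- main induction: x i is supported on coordinates ≤ i with nonzero i-th coordinate
  have key : ∀ i, ∀ hiN : i ≤ N, (∀ j : Fin (N + 2), i < (j : ℕ) → x i j = 0) ∧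
      x i ⟨i, by omega⟩ ≠ 0 := by
    intro i
    induction i using Nat.strong_induction_on with
    | _ i ih =>
      intro hiN
      match i, hiN with
      | 0, _ =>
        refine ⟨hx0z, ?_⟩
        rw [hx0]
        simpa using hRne
      | (i + 1), hiN =>
        have hiN' : i ≤ N := by omega
        have hxi := ih i (by omega) hiN'
        have hxeq := hx (i + 1) (by omega) hiN
        constructor
        · intro j hj
          rw [hxeq]
          simp only [Pi.sub_apply, Finset.sum_apply, Pi.smul_apply, smul_eq_mul]
          rw [hx0z j (by omega), Finset.sum_eq_zero, sub_zero]
          intro k hk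
          have hk' : k < i + 1 := Finset.mem_range.mp hk
          rw [hgz k (by omega) (ih k (by omega) (by omega)).1 j (by omega), mul_zero]
        · rw [hxeq]
          simp only [Pi.sub_apply, Finset.sum_apply, Pi.smul_apply, smul_eq_mul]
          rw [hx0z ⟨i + 1, by omega⟩ (by simp), Finset.sum_eq_single i]
          · rw [hgd i hiN' hxi.1]
            have hne := hH (i + 1) (by omega) hiN
            simp only [Nat.add_sub_cancel] at hne
            simp only [zero_sub, ne_eq, neg_eq_zero]
            exact mul_ne_zero hne hxi.2
          · intro k hk hkne
            have hk' : k < i + 1 := Finset.mem_range.mp hk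
            rw [hgz k (by omega) (ih k (by omega) (by omega)).1 ⟨i + 1, by omega⟩
              (by simp; omega), mul_zero]
          · intro habs
            exact absurd (Finset.self_mem_range_succ i) habs
  -- assemble into a lower triangular matrix
  set M : Matrix (Fin (N + 2)) (Fin (N + 2)) ℝ :=
    (Fin.cons (x 0) (fun k : Fin (N + 1) => g (k : ℕ))) with hM
  refine (Matrix.linearIndependent_rows_iff_isUnit (A := M)).mpr ?_
  rw [Matrix.isUnit_iff_isUnit_det, isUnit_iff_ne_zero]
  have tri : M.BlockTriangular OrderDual.toDual := by
    intro a b hab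
    have hab' : (a : ℕ) < (b : ℕ) := hab
    induction a using Fin.cases with
    | zero => exact hx0z b (by simpa using hab')
    | succ k =>
      show g (k : ℕ) b = 0
      have hkN : (k : ℕ) ≤ N := by omega
      exact hgz k hkN (key k hkN).1 b (by simpa using hab')
  rw [Matrix.det_of_lowerTriangular M tri]
  rw [Finset.prod_ne_zero_iff]
  intro a _
  induction a using Fin.cases with
  | zero =>
    show x 0 0 ≠ 0
    rw [hx0]
    simpa using hRne
  | succ k =>
    show g (k : ℕ) (Fin.succ k) ≠ 0
    have hkN : (k : ℕ) ≤ N := by omega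
    have : (Fin.succ k : Fin (N + 2)) = ⟨(k : ℕ) + 1, by omega⟩ := by
      ext; simp
    rw [this, hgd k hkN (key k hkN).1]
    exact (key k hkN).2
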